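/- arXiv:2103.10182 — 3 statements merged into one kernel-verified Lean document; each statement's English description precedes it below -/
import Mathlib

section
/- The Bayesian inverse problem with Gaussian likelihood is weakly well-posed: if (y_n) is a sequence in ℝ^p converging to y, then for every bounded continuous function f : ℝ^m → ℝ one has ∫ f(z) dπ_{y_n}(z) → ∫ f(z) dπ_y(z) as n → ∞; that is, the posterior measures π_{y_n} converge weakly to π_y. -/
open Real MeasureTheory Filter

/-- Weak well-posedness: if `y_n → y` then for every bounded continuous
`f : ℝ^m → ℝ`, `∫ f dπ_{y_n} → ∫ f dπ_y`, where `π_y` is the probability measure with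
density `z ↦ L(y, z)/Z(y)` with respect to the prior `P`. -/
theorem posterior_weak_wellposed
    (m d p : ℕ) (hm : 0 < m) (hd : 0 < d) (hp : 0 < p)
    (μθ : EuclideanSpace ℝ (Fin m) → EuclideanSpace ℝ (Fin d))
    (L : ℝ) (hL : 0 ≤ L)
    (hLip : ∀ z z', ‖μθ z - μθ z'‖ ≤ L * ‖z - z'‖)
    (A : EuclideanSpace ℝ (Fin d) →L[ℝ] EuclideanSpace ℝ (Fin p))
    (σ : ℝ) (hσ : 0 < σ)
    (Φ : EuclideanSpace ℝ (Fin m) → EuclideanSpace ℝ (Fin p) → ℝ)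
    (hΦ : ∀ z y, Φ z y = ‖y - A (μθ z)‖ ^ 2 / (2 * σ ^ 2))
    (Lik : EuclideanSpace ℝ (Fin p) → EuclideanSpace ℝ (Fin m) → ℝ)
    (hLik : ∀ y z, Lik y z = (2 * π * σ ^ 2) ^ (-(p : ℝ) / 2) * Real.exp (-(Φ z y)))
    (P : Measure (EuclideanSpace ℝ (Fin m))) [IsProbabilityMeasure P]
    (Z : EuclideanSpace ℝ (Fin p) → ℝ)
    (hZ : ∀ y, Z y = ∫ z, Lik y z ∂P)
    (post : EuclideanSpace ℝ (Fin p) → Measure (EuclideanSpace ℝ (Fin m)))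
    (hpost : ∀ y, post y = P.withDensity (fun z => ENNReal.ofReal (Lik y z / Z y)))
    (y : EuclideanSpace ℝ (Fin p)) (yn : ℕ → EuclideanSpace ℝ (Fin p))
    (hyn : Tendsto yn atTop (nhds y)) :
    ∀ f : EuclideanSpace ℝ (Fin m) → ℝ, Continuous f → (∃ C, ∀ z, |f z| ≤ C) →
      Tendsto (fun n => ∫ z, f z ∂(post (yn n))) atTop (nhds (∫ z, f z ∂(post y))) := by

  intro f hf hfb
  obtain ⟨C, hC⟩ := hfb
  have hC0 : (0:ℝ) ≤ C := (abs_nonneg (f 0)).trans (hC 0)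
  have hμθc : Continuous μθ := by
    have hlw : LipschitzWith (Real.toNNReal L) μθ :=
      LipschitzWith.of_dist_le_mul (fun x y' => by
        rw [dist_eq_norm, dist_eq_norm, Real.coe_toNNReal L hL]
        exact hLip x y')
    exact hlw.continuous
  set c : ℝ := (2 * π * σ ^ 2) ^ (-(p:ℝ)/2) with hc
  have hcpos : 0 < c := Real.rpow_pos_of_pos (by positivity) _
  have hΦnn : ∀ z y', 0 ≤ Φ z y' := fun z y' => by rw [hΦ]; positivity
  have hLpos : ∀ y' z, 0 < Lik y' z := fun y' z => by
    rw [hLik]; exact mul_pos hcpos (Real.exp_pos _)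
  have hLle : ∀ y' z, Lik y' z ≤ c := fun y' z => by
    rw [hLik]
    calc c * Real.exp (-(Φ z y')) ≤ c * 1 := by
          exact mul_le_mul_of_nonneg_left
            (Real.exp_le_one_iff.mpr (neg_nonpos.mpr (hΦnn z y'))) hcpos.le
      _ = c := mul_one c
  have hLcont : ∀ y', Continuous (Lik y') := by
    intro y'
    have h1 : Lik y' = fun z => c * Real.exp (-(‖y' - A (μθ z)‖ ^ 2 / (2 * σ ^ 2))) := by
      funext z; rw [hLik, hΦ]
    rw [h1]
    exact continuous_const.mul (Real.continuous_exp.comp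
      (((continuous_const.sub (A.continuous.comp hμθc)).norm.pow 2).div_const _).neg)
  have hLconty : ∀ z, Continuous fun y' => Lik y' z := by
    intro z
    have h1 : (fun y' => Lik y' z) = fun y' => c * Real.exp (-(‖y' - A (μθ z)‖ ^ 2 / (2 * σ ^ 2))) := by
      funext y'; rw [hLik, hΦ]
    rw [h1]
    exact continuous_const.mul (Real.continuous_exp.comp
      (((continuous_id.sub continuous_const).norm.pow 2).div_const _).neg)
  have hint : ∀ y', Integrable (Lik y') P := by
    intro y'
    refine (integrable_const c).mono' (hLcont y').aestronglyMeasurable ?_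
    filter_upwards with z
    rw [Real.norm_eq_abs, abs_of_pos (hLpos y' z)]
    exact hLle y' z
  have hZpos : ∀ y', 0 < Z y' := by
    intro y'
    rw [hZ]
    rw [integral_pos_iff_support_of_nonneg (fun z => (hLpos y' z).le) (hint y')]
    have hsup : Function.support (Lik y') = Set.univ :=
      Set.eq_univ_of_forall fun z => (hLpos y' z).ne'
    rw [hsup]
    simp
  have hZt : Tendsto (fun n => Z (yn n)) atTop (nhds (Z y)) := by
    simp only [hZ]
    apply tendsto_integral_of_dominated_convergence (fun _ => c)
    · exact fun n => (hLcont (yn n)).aestronglyMeasurable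
    · exact integrable_const c
    · intro n; filter_upwards with z
      rw [Real.norm_eq_abs, abs_of_pos (hLpos _ z)]
      exact hLle _ z
    · filter_upwards with z
      exact (((hLconty z).tendsto y).comp hyn)
  have hNt : Tendsto (fun n => ∫ z, f z * Lik (yn n) z ∂P) atTop
      (nhds (∫ z, f z * Lik y z ∂P)) := by
    apply tendsto_integral_of_dominated_convergence (fun _ => C * c)
    · exact fun n => (hf.mul (hLcont (yn n))).aestronglyMeasurable
    · exact integrable_const _
    · intro n; filter_upwards with z
      rw [Real.norm_eq_abs, abs_mul, abs_of_pos (hLpos _ z)]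
      exact mul_le_mul (hC z) (hLle _ z) (hLpos _ z).le hC0
    · filter_upwards with z
      exact Tendsto.const_mul (f z) (((hLconty z).tendsto y).comp hyn)
  have hrepr : ∀ y', ∫ z, f z ∂(post y') = (∫ z, f z * Lik y' z ∂P) / Z y' := by
    intro y'
    rw [hpost]
    have hmeas : Measurable fun z => (Lik y' z / Z y').toNNReal :=
      ((hLcont y').measurable.div_const _).real_toNNReal
    have heq : (fun z => ENNReal.ofReal (Lik y' z / Z y'))
        = fun z => ((Lik y' z / Z y').toNNReal : ENNReal) := rfl
    rw [heq, integral_withDensity_eq_integral_smul hmeas]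
    have heq2 : (fun z => (Lik y' z / Z y').toNNReal • f z)
        = fun z => (f z * Lik y' z) / Z y' := by
      funext z
      rw [NNReal.smul_def, smul_eq_mul,
        Real.coe_toNNReal _ (div_nonneg (hLpos y' z).le (hZpos y').le)]
      ring
    rw [heq2, integral_div]
  rw [hrepr y]
  simp only [hrepr]
  exact hNt.div hZt (hZpos y).ne'
end

section
/- The Bayesian inverse problem with Gaussian likelihood is well-posed in the Hellinger sense: if (y_n) is a sequence in ℝ^p converging to y, then the squared Hellinger distance between the posteriors tends to zero, i.e. ∫ ( √(L(y_n, z)/Z(y_n)) − √(L(y, z)/Z(y)) )² dP(z) → 0 as n → ∞. -/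
open Real MeasureTheory Filter

/-- Hellinger well-posedness: if `y_n → y` then the squared Hellinger
distance between the posteriors tends to zero:
`∫ (√(L(y_n, z)/Z(y_n)) − √(L(y, z)/Z(y)))² dP(z) → 0`. -/
theorem posterior_hellinger_wellposed
    (m d p : ℕ) (hm : 0 < m) (hd : 0 < d) (hp : 0 < p)
    (μθ : EuclideanSpace ℝ (Fin m) → EuclideanSpace ℝ (Fin d))
    (L : ℝ) (hL : 0 ≤ L)
    (hLip : ∀ z z', ‖μθ z - μθ z'‖ ≤ L * ‖z - z'‖)
    (A : EuclideanSpace ℝ (Fin d) →L[ℝ] EuclideanSpace ℝ (Fin p))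
    (σ : ℝ) (hσ : 0 < σ)
    (Φ : EuclideanSpace ℝ (Fin m) → EuclideanSpace ℝ (Fin p) → ℝ)
    (hΦ : ∀ z y, Φ z y = ‖y - A (μθ z)‖ ^ 2 / (2 * σ ^ 2))
    (Lik : EuclideanSpace ℝ (Fin p) → EuclideanSpace ℝ (Fin m) → ℝ)
    (hLik : ∀ y z, Lik y z = (2 * π * σ ^ 2) ^ (-(p : ℝ) / 2) * Real.exp (-(Φ z y)))
    (P : Measure (EuclideanSpace ℝ (Fin m))) [IsProbabilityMeasure P]
    (Z : EuclideanSpace ℝ (Fin p) → ℝ)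
    (hZ : ∀ y, Z y = ∫ z, Lik y z ∂P)
    (y : EuclideanSpace ℝ (Fin p)) (yn : ℕ → EuclideanSpace ℝ (Fin p))
    (hyn : Tendsto yn atTop (nhds y)) :
    Tendsto
      (fun n => ∫ z,
        (Real.sqrt (Lik (yn n) z / Z (yn n)) - Real.sqrt (Lik y z / Z y)) ^ 2 ∂P)
      atTop (nhds 0) := by
  set c : ℝ := (2 * π * σ ^ 2) ^ (-(p : ℝ) / 2) with hcdef
  have hc : 0 < c := Real.rpow_pos_of_pos (by positivity) _
  -- continuity of μθ
  have hμcont : Continuous μθ := by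
    refine (LipschitzWith.of_dist_le_mul (K := Real.toNNReal L) ?_).continuous
    intro z z'
    simpa [dist_eq_norm, Real.coe_toNNReal L hL] using hLip z z'
  -- joint continuity of Lik
  have hLikcont : Continuous (fun q : EuclideanSpace ℝ (Fin p) × EuclideanSpace ℝ (Fin m) => Lik q.1 q.2) := by
    have : (fun q : EuclideanSpace ℝ (Fin p) × EuclideanSpace ℝ (Fin m) => Lik q.1 q.2)
        = fun q => c * Real.exp (-(‖q.1 - A (μθ q.2)‖ ^ 2 / (2 * σ ^ 2))) := by
      funext q; rw [hLik, hΦ]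
    rw [this]
    fun_prop
  have hLikpos : ∀ y' z, 0 < Lik y' z := by
    intro y' z; rw [hLik]; positivity
  have hLikle : ∀ y' z, Lik y' z ≤ c := by
    intro y' z
    rw [hLik]
    have h1 : Real.exp (-(Φ z y')) ≤ 1 := by
      rw [Real.exp_le_one_iff]
      rw [hΦ, neg_nonpos]; positivity
    nlinarith
  have hcontz : ∀ y', Continuous fun z => Lik y' z :=
    fun y' => hLikcont.comp (continuous_const.prodMk continuous_id)
  have hint : ∀ y', Integrable (fun z => Lik y' z) P := by
    intro y'
    refine Integrable.mono' (integrable_const c) ((hcontz y').aestronglyMeasurable) ?_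
    filter_upwards with z
    rw [Real.norm_eq_abs, abs_of_pos (hLikpos y' z)]
    exact hLikle y' z
  have hZpos : ∀ y', 0 < Z y' := by
    intro y'
    rw [hZ]
    rw [integral_pos_iff_support_of_nonneg (fun z => (hLikpos y' z).le) (hint y')]
    have : Function.support (fun z => Lik y' z) = Set.univ := by
      ext z; simp [Function.support, (hLikpos y' z).ne']
    simp [this]
  -- Lik (yn n) z → Lik y z
  have hLiktend : ∀ z, Tendsto (fun n => Lik (yn n) z) atTop (nhds (Lik y z)) := by
    intro z
    have : Tendsto (fun n => (yn n, z)) atTop (nhds (y, z)) :=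
      hyn.prodMk_nhds tendsto_const_nhds
    exact (hLikcont.tendsto (y, z)).comp this
  -- Z (yn n) → Z y
  have hZtend : Tendsto (fun n => Z (yn n)) atTop (nhds (Z y)) := by
    simp only [hZ]
    refine tendsto_integral_filter_of_dominated_convergence (fun _ => c) ?_ ?_ (integrable_const c) ?_
    · filter_upwards with n
      exact (hcontz (yn n)).aestronglyMeasurable
    · filter_upwards with n
      filter_upwards with z
      rw [Real.norm_eq_abs, abs_of_pos (hLikpos _ z)]
      exact hLikle _ z
    · filter_upwards with z using hLiktend z
  have hev : ∀ᶠ n in atTop, Z y / 2 < Z (yn n) :=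
    hZtend.eventually (eventually_gt_nhds (by linarith [hZpos y]))
  set B : ℝ := Real.sqrt (c / (Z y / 2)) + Real.sqrt (c / Z y) with hBdef
  have key : Tendsto
      (fun n => ∫ z,
        (Real.sqrt (Lik (yn n) z / Z (yn n)) - Real.sqrt (Lik y z / Z y)) ^ 2 ∂P)
      atTop (nhds (∫ _z, (0 : ℝ) ∂P)) := by
    refine tendsto_integral_filter_of_dominated_convergence (fun _ => B ^ 2) ?_ ?_ (integrable_const _) ?_
    · filter_upwards with n
      exact (((((hcontz (yn n)).div_const _).sqrt.sub
        (((hcontz y).div_const _).sqrt)).pow 2)).aestronglyMeasurable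
    · filter_upwards [hev] with n hn
      filter_upwards with z
      have h1 : Real.sqrt (Lik (yn n) z / Z (yn n)) ≤ Real.sqrt (c / (Z y / 2)) := by
        apply Real.sqrt_le_sqrt
        have hZn : 0 < Z (yn n) := lt_trans (by linarith [hZpos y]) hn
        calc Lik (yn n) z / Z (yn n) ≤ c / Z (yn n) :=
              div_le_div_of_nonneg_right (hLikle _ z) hZn.le |>.trans_eq rfl
          _ ≤ c / (Z y / 2) := by
              apply div_le_div_of_nonneg_left hc.le (by linarith [hZpos y]) hn.le
      have h2 : Real.sqrt (Lik y z / Z y) ≤ Real.sqrt (c / Z y) := by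
        apply Real.sqrt_le_sqrt
        exact div_le_div_of_nonneg_right (hLikle _ z) (hZpos y).le |>.trans_eq rfl
      have h3 : 0 ≤ Real.sqrt (Lik (yn n) z / Z (yn n)) := Real.sqrt_nonneg _
      have h4 : 0 ≤ Real.sqrt (Lik y z / Z y) := Real.sqrt_nonneg _
      rw [Real.norm_eq_abs, abs_of_nonneg (sq_nonneg _)]
      nlinarith
    · filter_upwards with z
      have hdiv : Tendsto (fun n => Lik (yn n) z / Z (yn n)) atTop (nhds (Lik y z / Z y)) :=
        (hLiktend z).div hZtend (hZpos y).ne'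
      have := ((hdiv.sqrt.sub (tendsto_const_nhds (x := Real.sqrt (Lik y z / Z y)))).pow 2)
      simpa using this
  simpa using key
end

section
/- If the prior P has finite first moment, i.e. ∫ ‖z‖ dP(z) < ∞, then the posterior mean of the reconstructed image is a well-posed estimator: the map y ↦ ∫ μθ(z) dπ_y(z) from ℝ^p to ℝ^d is continuous. -/
open Real MeasureTheory

/-- If the prior `P` has finite first moment, then the posterior mean of the
reconstructed image, `y ↦ ∫ μθ(z) dπ_y(z)`, is a continuous map from `ℝ^p` to `ℝ^d`. -/
theorem posterior_mean_wellposed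
    (m d p : ℕ) (hm : 0 < m) (hd : 0 < d) (hp : 0 < p)
    (μθ : EuclideanSpace ℝ (Fin m) → EuclideanSpace ℝ (Fin d))
    (L : ℝ) (hL : 0 ≤ L)
    (hLip : ∀ z z', ‖μθ z - μθ z'‖ ≤ L * ‖z - z'‖)
    (A : EuclideanSpace ℝ (Fin d) →L[ℝ] EuclideanSpace ℝ (Fin p))
    (σ : ℝ) (hσ : 0 < σ)
    (Φ : EuclideanSpace ℝ (Fin m) → EuclideanSpace ℝ (Fin p) → ℝ)
    (hΦ : ∀ z y, Φ z y = ‖y - A (μθ z)‖ ^ 2 / (2 * σ ^ 2))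
    (Lik : EuclideanSpace ℝ (Fin p) → EuclideanSpace ℝ (Fin m) → ℝ)
    (hLik : ∀ y z, Lik y z = (2 * π * σ ^ 2) ^ (-(p : ℝ) / 2) * Real.exp (-(Φ z y)))
    (P : Measure (EuclideanSpace ℝ (Fin m))) [IsProbabilityMeasure P]
    (Z : EuclideanSpace ℝ (Fin p) → ℝ)
    (hZ : ∀ y, Z y = ∫ z, Lik y z ∂P)
    (post : EuclideanSpace ℝ (Fin p) → Measure (EuclideanSpace ℝ (Fin m)))
    (hpost : ∀ y, post y = P.withDensity (fun z => ENNReal.ofReal (Lik y z / Z y)))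
    (hmom : ∫⁻ z, (‖z‖₊ : ENNReal) ∂P < ⊤) :
    Continuous (fun y : EuclideanSpace ℝ (Fin p) => ∫ z, μθ z ∂(post y)) := by
  have hμθc : Continuous μθ :=
    (LipschitzWith.of_dist_le_mul (K := ⟨L, hL⟩) (fun z z' => by
      rw [dist_eq_norm, dist_eq_norm]; exact hLip z z')).continuous
  set C : ℝ := (2 * π * σ ^ 2) ^ (-(p : ℝ) / 2) with hCdef
  have hbase : (0 : ℝ) < 2 * π * σ ^ 2 := by positivity
  have hC : 0 < C := Real.rpow_pos_of_pos hbase _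
  have hΦnn : ∀ z y, 0 ≤ Φ z y := fun z y => by rw [hΦ]; positivity
  have hLikpos : ∀ y z, 0 < Lik y z := fun y z => by
    rw [hLik]; exact mul_pos hC (Real.exp_pos _)
  have hLikle : ∀ y z, Lik y z ≤ C := fun y z => by
    rw [hLik]
    calc C * Real.exp (-(Φ z y)) ≤ C * 1 := by
          gcongr
          exact Real.exp_le_one_iff.2 (neg_nonpos.2 (hΦnn z y))
      _ = C := mul_one C
  have hΦc : Continuous fun q : EuclideanSpace ℝ (Fin m) × EuclideanSpace ℝ (Fin p) =>
      Φ q.1 q.2 := by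
    have : (fun q : EuclideanSpace ℝ (Fin m) × EuclideanSpace ℝ (Fin p) => Φ q.1 q.2)
        = fun q => ‖q.2 - A (μθ q.1)‖ ^ 2 / (2 * σ ^ 2) := by
      funext q; rw [hΦ]
    rw [this]
    fun_prop
  have hLikc : Continuous fun q : EuclideanSpace ℝ (Fin p) × EuclideanSpace ℝ (Fin m) =>
      Lik q.1 q.2 := by
    have : (fun q : EuclideanSpace ℝ (Fin p) × EuclideanSpace ℝ (Fin m) => Lik q.1 q.2)
        = fun q => C * Real.exp (-(Φ q.2 q.1)) := by
      funext q; rw [hLik]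
    rw [this]
    exact continuous_const.mul ((hΦc.comp (continuous_snd.prodMk continuous_fst)).neg.rexp)
  have hLik_contz : ∀ y, Continuous fun z => Lik y z := fun y =>
    hLikc.comp (continuous_const.prodMk continuous_id)
  have hLik_conty : ∀ z, Continuous fun y => Lik y z := fun z =>
    hLikc.comp (continuous_id.prodMk continuous_const)
  -- integrability of the norm
  have hnorm_int : Integrable (fun z : EuclideanSpace ℝ (Fin m) => ‖z‖) P := by
    refine ⟨continuous_norm.aestronglyMeasurable, ?_⟩
    simpa [HasFiniteIntegral, enorm_eq_nnnorm] using hmom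
  have hLik_int : ∀ y, Integrable (Lik y) P := by
    intro y
    refine Integrable.mono' (integrable_const C) (hLik_contz y).aestronglyMeasurable ?_
    filter_upwards with z
    rw [Real.norm_eq_abs, abs_of_pos (hLikpos y z)]
    exact hLikle y z
  -- positivity and continuity of Z
  have hZpos : ∀ y, 0 < Z y := by
    intro y
    rw [hZ]
    rw [integral_pos_iff_support_of_nonneg (fun z => (hLikpos y z).le) (hLik_int y)]
    have hs : Function.support (Lik y) = Set.univ := by
      ext z; simp [Function.support, (hLikpos y z).ne']
    simp [hs]
  have hZcont : Continuous Z := by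
    have : Continuous fun y => ∫ z, Lik y z ∂P := by
      refine continuous_of_dominated (fun y => (hLik_contz y).aestronglyMeasurable)
        (fun y => ?_) (integrable_const C) ?_
      · filter_upwards with z
        rw [Real.norm_eq_abs, abs_of_pos (hLikpos y z)]
        exact hLikle y z
      · filter_upwards with z
        exact hLik_conty z
    have h2 : Z = fun y => ∫ z, Lik y z ∂P := funext hZ
    rw [h2]; exact this
  -- the numerator G and its continuity
  have hμbnd : ∀ z, ‖μθ z‖ ≤ ‖μθ 0‖ + L * ‖z‖ := by
    intro z
    have h1 := hLip z 0
    have h2 : ‖μθ z‖ ≤ ‖μθ z - μθ 0‖ + ‖μθ 0‖ := by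
      have := norm_sub_norm_le (μθ z) (μθ 0); linarith [abs_nonneg (‖μθ z‖ - ‖μθ 0‖)]
    simp only [sub_zero] at h1
    linarith
  have hbound_int : Integrable (fun z : EuclideanSpace ℝ (Fin m) =>
      C * ‖μθ 0‖ + (C * L) * ‖z‖) P :=
    (integrable_const _).add (hnorm_int.const_mul _)
  have hGcont : Continuous fun y => ∫ z, Lik y z • μθ z ∂P := by
    refine continuous_of_dominated
      (fun y => ((hLik_contz y).smul hμθc).aestronglyMeasurable)
      (fun y => ?_) hbound_int ?_
    · filter_upwards with z
      rw [norm_smul, Real.norm_eq_abs, abs_of_pos (hLikpos y z)]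
      calc Lik y z * ‖μθ z‖ ≤ C * (‖μθ 0‖ + L * ‖z‖) := by
            apply mul_le_mul (hLikle y z) (hμbnd z) (norm_nonneg _) hC.le
        _ = C * ‖μθ 0‖ + (C * L) * ‖z‖ := by ring
    · filter_upwards with z
      exact (hLik_conty z).smul continuous_const
  -- rewrite the posterior mean
  have key : ∀ y, ∫ z, μθ z ∂(post y) = (Z y)⁻¹ • ∫ z, Lik y z • μθ z ∂P := by
    intro y
    rw [hpost]
    have hmeas : Measurable fun z => (Lik y z / Z y).toNNReal :=
      (((hLik_contz y).div_const _).measurable).real_toNNReal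
    have hdens : (fun z => ENNReal.ofReal (Lik y z / Z y))
        = fun z => ((Lik y z / Z y).toNNReal : ENNReal) := rfl
    rw [hdens, integral_withDensity_eq_integral_smul hmeas]
    have hEq : (fun z => (Lik y z / Z y).toNNReal • μθ z)
        = fun z => (Z y)⁻¹ • (Lik y z • μθ z) := by
      funext z
      rw [NNReal.smul_def, Real.coe_toNNReal _ (div_nonneg (hLikpos y z).le (hZpos y).le), smul_smul,
        div_eq_inv_mul]
    rw [hEq, integral_smul]
  have hfun : (fun y : EuclideanSpace ℝ (Fin p) => ∫ z, μθ z ∂(post y))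
      = fun y => (Z y)⁻¹ • ∫ z, Lik y z • μθ z ∂P := funext key
  rw [hfun]
  exact (hZcont.inv₀ fun y => (hZpos y).ne').smul hGcont
end
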